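/- Let E be a finite set, Q a real E×E matrix, α > 0, and μ a probability vector on E such that ∑_j (μ·exp(tQ))_j = e^{-αt} for all t ≥ 0. Define ν = (-1/α)·μQ. If ν has nonnegative entries and ∑_j ν_j = 1 (i.e. ν is a probability vector), then ∑_j (ν·exp(tQ))_j = e^{-αt} for all t ≥ 0. -/

import Mathlib

open Matrix

attribute [local instance] Matrix.linftyOpNormedRing Matrix.linftyOpNormedAlgebra
  Matrix.linftyOpNormedAddCommGroup Matrix.linftyOpNormedSpace

theorem stmt_5 (E : Type) [Fintype E] [DecidableEq E] (Q : Matrix E E ℝ) (α : ℝ) (μ : E → ℝ)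
    (hα : 0 < α)
    (hμ : ∀ i, 0 ≤ μ i) (hμ1 : ∑ i, μ i = 1)
    (hexp : ∀ t : ℝ, 0 ≤ t → ∑ j, (μ ᵥ* NormedSpace.exp (t • Q)) j = Real.exp (-α * t))
    (ν : E → ℝ) (hν : ν = (-1 / α) • (μ ᵥ* Q))
    (hνpos : ∀ j, 0 ≤ ν j) (hν1 : ∑ j, ν j = 1) :
    ∀ t : ℝ, 0 ≤ t → ∑ j, (ν ᵥ* NormedSpace.exp (t • Q)) j = Real.exp (-α * t) := by
  -- linear functional M ↦ ∑ j, (μ ᵥ* M) j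
  set Llin : Matrix E E ℝ →ₗ[ℝ] ℝ :=
    { toFun := fun M => ∑ j, (μ ᵥ* M) j
      map_add' := by
        intro A B
        simp [Matrix.vecMul, dotProduct, Finset.sum_add_distrib, mul_add]
      map_smul' := by
        intro c A
        simp [Matrix.vecMul, dotProduct, Finset.mul_sum, mul_left_comm] } with hLlin
  set L : Matrix E E ℝ →L[ℝ] ℝ := LinearMap.toContinuousLinearMap Llin with hL
  have hLapp : ∀ M, L M = ∑ j, (μ ᵥ* M) j := fun M => rfl
  -- derivative of g(s) = ∑ j, (μ ᵥ* exp(s•Q)) j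
  have hg : ∀ t : ℝ, HasDerivAt (fun s : ℝ => ∑ j, (μ ᵥ* NormedSpace.exp (s • Q)) j)
      (∑ j, (μ ᵥ* (Q * NormedSpace.exp (t • Q))) j) t := by
    intro t
    have h1 := hasDerivAt_exp_smul_const' (𝕂 := ℝ) Q t
    have h2 := L.hasFDerivAt.comp_hasDerivAt t h1
    exact h2
  -- key identity relating ν-sum to μ-derivative
  have key : ∀ t : ℝ, ∑ j, (ν ᵥ* NormedSpace.exp (t • Q)) j
      = (-1 / α) * ∑ j, (μ ᵥ* (Q * NormedSpace.exp (t • Q))) j := by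
    intro t
    subst hν
    rw [Finset.mul_sum]
    congr 1
    ext j
    rw [Matrix.smul_vecMul, ← Matrix.vecMul_vecMul]
    simp
  -- for t > 0
  have main_pos : ∀ t : ℝ, 0 < t →
      ∑ j, (ν ᵥ* NormedSpace.exp (t • Q)) j = Real.exp (-α * t) := by
    intro t ht
    have heq : (fun s : ℝ => ∑ j, (μ ᵥ* NormedSpace.exp (s • Q)) j)
        =ᶠ[nhds t] (fun s => Real.exp (-α * s)) := by
      filter_upwards [eventually_gt_nhds ht] with s hs
      exact hexp s hs.le
    have hd2 : HasDerivAt (fun s => Real.exp (-α * s))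
        (∑ j, (μ ᵥ* (Q * NormedSpace.exp (t • Q))) j) t := (hg t).congr_of_eventuallyEq heq.symm
    have hd3 : HasDerivAt (fun s : ℝ => Real.exp (-α * s)) (-α * Real.exp (-α * t)) t := by
      simpa [Function.comp_def, mul_comm] using
        (Real.hasDerivAt_exp (-α * t)).comp t ((hasDerivAt_id t).const_mul (-α))
    have hu := hd2.unique hd3
    rw [key, hu]
    field_simp
  intro t ht
  rcases eq_or_lt_of_le ht with h0 | hpos
  · -- t = 0 : by continuity from the right
    subst h0
    have hcexp : Continuous fun s : ℝ => NormedSpace.exp (s • Q) :=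
      NormedSpace.exp_continuous.comp (continuous_id.smul continuous_const)
    have hc : Continuous fun s : ℝ => ∑ j, (ν ᵥ* NormedSpace.exp (s • Q)) j := by
      apply continuous_finset_sum
      intro j _
      apply continuous_finset_sum
      intro i _
      exact continuous_const.mul ((continuous_apply j).comp ((continuous_apply i).comp hcexp))
    have h1 : Filter.Tendsto (fun s : ℝ => ∑ j, (ν ᵥ* NormedSpace.exp (s • Q)) j)
        (nhdsWithin 0 (Set.Ioi 0)) (nhds (∑ j, (ν ᵥ* NormedSpace.exp ((0:ℝ) • Q)) j)) :=
      (hc.tendsto 0).mono_left nhdsWithin_le_nhds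
    have h2 : Filter.Tendsto (fun s : ℝ => ∑ j, (ν ᵥ* NormedSpace.exp (s • Q)) j)
        (nhdsWithin 0 (Set.Ioi 0)) (nhds (Real.exp (-α * 0))) := by
      have hcong : ∀ᶠ s in nhdsWithin (0:ℝ) (Set.Ioi 0),
          ∑ j, (ν ᵥ* NormedSpace.exp (s • Q)) j = Real.exp (-α * s) := by
        filter_upwards [self_mem_nhdsWithin] with s hs
        exact main_pos s hs
      have hce : Filter.Tendsto (fun s : ℝ => Real.exp (-α * s))
          (nhdsWithin 0 (Set.Ioi 0)) (nhds (Real.exp (-α * 0))) :=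
        ((Real.continuous_exp.comp (continuous_const.mul continuous_id)).tendsto 0).mono_left
          nhdsWithin_le_nhds
      exact hce.congr' (by filter_upwards [hcong] with s hs using hs.symm)
    exact tendsto_nhds_unique h1 h2
  · exact main_pos t hpos
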